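/- Let p be an odd prime, L = ⟨−1,2⟩ ≤ (Z/pZ)^× of index 5, and g a primitive root mod p. Then Σ_{i=1}^{4} A(i, 2i) > 0, where A(i,j) = |(1 + g^i L) ∩ g^j L| with indices taken mod 5. -/

import Mathlib

/-- The coset `g^i H` viewed as a subset of `ZMod p`. -/
def coset (p : ℕ) (g : (ZMod p)ˣ) (H : Subgroup (ZMod p)ˣ) (i : ℤ) : Set (ZMod p) :=
  (fun h : (ZMod p)ˣ => ((g ^ i * h : (ZMod p)ˣ) : ZMod p)) '' (H : Set (ZMod p)ˣ)

/-- The cyclotomic number `A(i,j) = |(1 + g^i H) ∩ g^j H|`. -/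
noncomputable def cyc (p : ℕ) (g : (ZMod p)ˣ) (H : Subgroup (ZMod p)ˣ) (i j : ℤ) : ℕ :=
  (((fun x => 1 + x) '' coset p g H i) ∩ coset p g H j).ncard

section Aux
variable {p : ℕ} [Fact p.Prime]

noncomputable def chi (g : (ZMod p)ˣ) (hg : ∀ x : (ZMod p)ˣ, x ∈ Subgroup.zpowers g)
    (x : (ZMod p)ˣ) : ZMod 5 :=
  (((Subgroup.mem_zpowers_iff.mp (hg x)).choose : ℤ) : ZMod 5)

lemma chi_spec (g : (ZMod p)ˣ) (hg : ∀ x : (ZMod p)ˣ, x ∈ Subgroup.zpowers g) (x : (ZMod p)ˣ) :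
    g ^ ((Subgroup.mem_zpowers_iff.mp (hg x)).choose) = x :=
  (Subgroup.mem_zpowers_iff.mp (hg x)).choose_spec

variable (g : (ZMod p)ˣ) (hg : ∀ x : (ZMod p)ˣ, x ∈ Subgroup.zpowers g)
  (L : Subgroup (ZMod p)ˣ) (hL5 : ∀ k : ℤ, g ^ k ∈ L ↔ (5:ℤ) ∣ k)

include hL5 in
lemma chi_eq {x : (ZMod p)ˣ} {k : ℤ} (h : g ^ k = x) : chi g hg x = (k : ZMod 5) := by
  have h2 := chi_spec g hg x
  set e := (Subgroup.mem_zpowers_iff.mp (hg x)).choose with he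
  have h3 : g ^ (e - k) ∈ L := by
    rw [zpow_sub, h2, h]
    simpa using L.one_mem
  have h5 : (5:ℤ) ∣ e - k := (hL5 _).mp h3
  have : ((e - k : ℤ) : ZMod 5) = 0 := by
    rwa [ZMod.intCast_zmod_eq_zero_iff_dvd]
  have : ((e:ℤ) : ZMod 5) = ((k:ℤ) : ZMod 5) := by push_cast at this ⊢; linear_combination this
  simpa [chi] using this

include hL5 in
lemma chi_zero_iff {x : (ZMod p)ˣ} : chi g hg x = 0 ↔ x ∈ L := by
  have h2 := chi_spec g hg x
  set e := (Subgroup.mem_zpowers_iff.mp (hg x)).choose with he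
  have : chi g hg x = ((e:ℤ) : ZMod 5) := rfl
  rw [this, ZMod.intCast_zmod_eq_zero_iff_dvd]
  rw [← h2, hL5 e]
  norm_num

include hL5 in
lemma chi_mul (x y : (ZMod p)ˣ) : chi g hg (x*y) = chi g hg x + chi g hg y := by
  have hx := chi_spec g hg x
  have hy := chi_spec g hg y
  have h : g ^ ((Subgroup.mem_zpowers_iff.mp (hg x)).choose + (Subgroup.mem_zpowers_iff.mp (hg y)).choose) = x * y := by
    rw [zpow_add, hx, hy]
  have := chi_eq g hg L hL5 h
  rw [this]; push_cast; rfl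

include hL5 in
lemma chi_inv (x : (ZMod p)ˣ) : chi g hg x⁻¹ = - chi g hg x := by
  have hx := chi_spec g hg x
  have h : g ^ (-(Subgroup.mem_zpowers_iff.mp (hg x)).choose) = x⁻¹ := by
    rw [zpow_neg, hx]
  have := chi_eq g hg L hL5 h
  rw [this]; push_cast; rfl

include hL5 in
lemma key (hneg : (-1 : (ZMod p)ˣ) ∈ L)
    (H : ∀ i : ZMod 5, i ≠ 0 → ∀ x y : (ZMod p)ˣ,
      chi g hg x = i → (y : ZMod p) = 1 + (x : ZMod p) → chi g hg y ≠ 2*i) : False := by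
  classical
  set χ := chi g hg with hχ
  have cmul : ∀ x y, χ (x*y) = χ x + χ y := chi_mul g hg L hL5
  have cinv : ∀ x, χ x⁻¹ = - χ x := chi_inv g hg L hL5
  have czero : ∀ x, χ x = 0 ↔ x ∈ L := fun x => chi_zero_iff g hg L hL5
  have cneg1 : χ (-1) = 0 := (czero _).mpr hneg
  have cneg : ∀ x, χ (-x) = χ x := by
    intro x
    rw [← neg_one_mul, cmul, cneg1, zero_add]
  have cone : χ 1 = 0 := (czero _).mpr L.one_mem
  -- existence of the unit 1 + x
  have hy_ex : ∀ x : (ZMod p)ˣ, χ x ≠ 0 → ∃ y : (ZMod p)ˣ, (y : ZMod p) = 1 + (x : ZMod p) := by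
    intro x hx
    have hx1 : (x : ZMod p) ≠ -1 := by
      intro h
      have : x = -1 := Units.ext (by simpa using h)
      rw [this] at hx
      exact hx cneg1
    have hne : (1 + (x : ZMod p)) ≠ 0 := by
      intro h
      exact hx1 (by linear_combination h)
    exact ⟨(isUnit_iff_ne_zero.mpr hne).unit, IsUnit.unit_spec _⟩
  -- Step A: all off-diagonal nonzero classes are excluded
  have hd5 : ∀ i j : ZMod 5, i ≠ 0 → j ≠ 0 → i ≠ j → ((j = 2*i) ∨ (j - i = 2*(-i)) ∨
      (i = 2*j) ∨ (i - j = 2*(-j)) ∨ (-i = 2*(j-i)) ∨ (-j = 2*(i-j))) := by decide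
  have H2 : ∀ i j : ZMod 5, i ≠ 0 → j ≠ 0 → i ≠ j →
      ∀ x y : (ZMod p)ˣ, χ x = i → (y : ZMod p) = 1 + (x : ZMod p) → χ y ≠ j := by
    intro i j hi hj hij x y hxi hy hyj
    have hxv : (x : ZMod p) ≠ 0 := Units.ne_zero x
    have hyv : (y : ZMod p) ≠ 0 := Units.ne_zero y
    have h1x : (1 : ZMod p) + (x : ZMod p) ≠ 0 := by rw [← hy]; exact hyv
    rcases hd5 i j hi hj hij with h|h|h|h|h|h
    · exact H i hi x y hxi hy (by rw [hyj, h])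
    · refine H (-i) (neg_ne_zero.mpr hi) x⁻¹ (y * x⁻¹) (by rw [cinv, hxi]) ?_ ?_
      · push_cast; rw [hy]; field_simp <;> ring
      · rw [cmul, cinv, hyj, hxi]; linear_combination h
    · refine H j hj (-y) (-x) (by rw [cneg, hyj]) ?_ (by rw [cneg, hxi, h])
      push_cast; rw [hy]; ring
    · refine H (-j) (neg_ne_zero.mpr hj) (-y⁻¹) (x * y⁻¹) (by rw [cneg, cinv, hyj]) ?_ ?_
      · push_cast; rw [hy]; field_simp <;> ring
      · rw [cmul, cinv, hxi, hyj]; linear_combination h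
    · refine H (j - i) (sub_ne_zero.mpr (Ne.symm hij)) (-(y * x⁻¹)) (-x⁻¹) ?_ ?_ ?_
      · rw [cneg, cmul, cinv, hyj, hxi]; ring
      · push_cast; rw [hy]; field_simp <;> ring
      · rw [cneg, cinv, hxi]; linear_combination h
    · refine H (i - j) (sub_ne_zero.mpr hij) (-(x * y⁻¹)) y⁻¹ ?_ ?_ ?_
      · rw [cneg, cmul, cinv, hxi, hyj]; ring
      · push_cast; rw [hy]; field_simp <;> ring
      · rw [cinv, hyj]; linear_combination h
  -- Step B: counting
  set C : ZMod 5 → Finset (ZMod p)ˣ := fun i => Finset.univ.filter (fun x => χ x = i) with hC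
  set Bf : ZMod 5 → ZMod 5 → Finset (ZMod p)ˣ := fun i j => Finset.univ.filter
    (fun x => χ x = i ∧ ∃ y : (ZMod p)ˣ, (y : ZMod p) = 1 + (x : ZMod p) ∧ χ y = j) with hBf
  have memC : ∀ i x, x ∈ C i ↔ χ x = i := by intro i x; simp [hC]
  have memB : ∀ i j x, x ∈ Bf i j ↔
      (χ x = i ∧ ∃ y : (ZMod p)ˣ, (y : ZMod p) = 1 + (x : ZMod p) ∧ χ y = j) := by
    intro i j x; simp [hBf]
  -- all classes have the same size
  have cardC : ∀ i : ZMod 5, (C i).card = (C 0).card := by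
    intro i
    set t : (ZMod p)ˣ := g ^ ((i.val : ℤ)) with ht
    have hct : χ t = i := by
      have h := chi_eq g hg L hL5 (x := t) (k := (i.val : ℤ)) rfl
      rw [hχ, h]
      push_cast
      simp [ZMod.natCast_val, ZMod.cast_id]
    refine Finset.card_nbij' (fun x => t⁻¹ * x) (fun x => t * x) ?_ ?_ ?_ ?_
    · intro a ha
      simp only [Finset.mem_coe] at ha ⊢
      rw [memC] at ha ⊢
      rw [cmul, cinv, hct, ha]; ring
    · intro a ha
      simp only [Finset.mem_coe] at ha ⊢
      rw [memC] at ha ⊢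
      rw [cmul, hct, ha, add_zero]
    · intro a _; simp
    · intro a _; simp
  -- row relation
  have rowsum : ∀ i : ZMod 5, i ≠ 0 → (C i).card = (Bf i 0).card + (Bf i i).card := by
    intro i hi
    have hun : C i = Bf i 0 ∪ Bf i i := by
      ext x
      rw [memC, Finset.mem_union, memB, memB]
      constructor
      · intro hx
        obtain ⟨y, hy⟩ := hy_ex x (by rw [hx]; exact hi)
        by_cases h0 : χ y = 0
        · exact Or.inl ⟨hx, y, hy, h0⟩
        by_cases hii : χ y = i
        · exact Or.inr ⟨hx, y, hy, hii⟩
        exact absurd rfl (H2 i (χ y) hi h0 (fun hc => hii hc.symm) x y hx hy)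
      · rintro (⟨hx, _⟩ | ⟨hx, _⟩) <;> exact hx
    rw [hun, Finset.card_union_of_disjoint]
    rw [Finset.disjoint_left]
    intro x hx1 hx2
    obtain ⟨_, y, hy, hy0⟩ := (memB _ _ _).mp hx1
    obtain ⟨_, y', hy', hyi⟩ := (memB _ _ _).mp hx2
    have hyy : y = y' := Units.ext (by rw [hy, hy'])
    apply hi
    rw [← hyi, ← hyy, hy0]
  -- inversion symmetry
  have geninv : ∀ (a b : ZMod 5) (x : (ZMod p)ˣ), x ∈ Bf a b → x⁻¹ ∈ Bf (-a) (b - a) := by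
    intro a b x hx
    obtain ⟨hxa, y, hy, hyb⟩ := (memB _ _ _).mp hx
    refine (memB _ _ _).mpr ⟨by rw [cinv, hxa], y * x⁻¹, ?_, by rw [cmul, cinv, hyb, hxa]; ring⟩
    have hxv : (x : ZMod p) ≠ 0 := Units.ne_zero x
    push_cast
    rw [hy]
    field_simp <;> ring
  have sigma : ∀ i : ZMod 5, (Bf i 0).card = (Bf (-i) (-i)).card := by
    intro i
    refine Finset.card_nbij' (fun x => x⁻¹) (fun x => x⁻¹) ?_ ?_ ?_ ?_
    · intro a ha
      have := geninv i 0 a ha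
      rwa [zero_sub] at this
    · intro a ha
      have := geninv (-i) (-i) a ha
      rwa [neg_neg, sub_self] at this
    · intro a _; simp
    · intro a _; simp
  -- the injection bound
  have hdisjB : ∀ i i' : ZMod 5, i ≠ i' → Disjoint (Bf i 0) (Bf i' 0) := by
    intro i i' hii
    rw [Finset.disjoint_left]
    intro x hx1 hx2
    obtain ⟨h1, -⟩ := (memB _ _ _).mp hx1
    obtain ⟨h2, -⟩ := (memB _ _ _).mp hx2
    exact hii (h1 ▸ h2 ▸ rfl)
  set U : Finset (ZMod p)ˣ := ((Bf 1 0 ∪ Bf 2 0) ∪ Bf 3 0) ∪ Bf 4 0 with hU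
  have hcardU : U.card = (Bf 1 0).card + (Bf 2 0).card + (Bf 3 0).card + (Bf 4 0).card := by
    rw [hU]
    rw [Finset.card_union_of_disjoint, Finset.card_union_of_disjoint,
      Finset.card_union_of_disjoint]
    · exact hdisjB 1 2 (by decide)
    · rw [Finset.disjoint_union_left]
      exact ⟨hdisjB 1 3 (by decide), hdisjB 2 3 (by decide)⟩
    · rw [Finset.disjoint_union_left, Finset.disjoint_union_left]
      exact ⟨⟨hdisjB 1 4 (by decide), hdisjB 2 4 (by decide)⟩, hdisjB 3 4 (by decide)⟩
  have hUmem : ∀ x ∈ U, ∃ i : ZMod 5, x ∈ Bf i 0 := by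
    intro x hx
    rw [hU] at hx
    simp only [Finset.mem_union] at hx
    rcases hx with ((h|h)|h)|h
    exacts [⟨1, h⟩, ⟨2, h⟩, ⟨3, h⟩, ⟨4, h⟩]
  have hone : (1 : (ZMod p)ˣ) ∈ C 0 := (memC _ _).mpr cone
  have hbound : U.card ≤ ((C 0).erase 1).card := by
    refine Finset.card_le_card_of_injOn
      (fun x => if h : IsUnit (1 + (x : ZMod p)) then h.unit else 1) ?_ ?_
    · intro x hx
      dsimp only
      obtain ⟨i, hxi⟩ := hUmem x hx
      obtain ⟨-, y, hy, hy0⟩ := (memB _ _ _).mp hxi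
      have hisu : IsUnit (1 + (x : ZMod p)) := ⟨y, hy⟩
      rw [dif_pos hisu]
      have huy : hisu.unit = y := Units.ext (by rw [IsUnit.unit_spec, hy])
      rw [huy]
      refine Finset.mem_erase.mpr ⟨?_, (memC _ _).mpr hy0⟩
      intro h1
      have : (y : ZMod p) = 1 := by rw [h1]; rfl
      rw [hy] at this
      exact Units.ne_zero x (by linear_combination this)
    · intro x hx x' hx' hfe
      dsimp only at hfe
      obtain ⟨i, hxi⟩ := hUmem x (by simpa using hx)
      obtain ⟨i', hxi'⟩ := hUmem x' (by simpa using hx')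
      obtain ⟨-, y, hy, -⟩ := (memB _ _ _).mp hxi
      obtain ⟨-, y', hy', -⟩ := (memB _ _ _).mp hxi'
      have hisu : IsUnit (1 + (x : ZMod p)) := ⟨y, hy⟩
      have hisu' : IsUnit (1 + (x' : ZMod p)) := ⟨y', hy'⟩
      rw [dif_pos hisu, dif_pos hisu'] at hfe
      have : (1 : ZMod p) + x = 1 + x' := by
        rw [← IsUnit.unit_spec hisu, ← IsUnit.unit_spec hisu', hfe]
      exact Units.ext (by linear_combination this)
  -- final arithmetic
  have e1 := rowsum 1 (by decide)
  have e2 := rowsum 2 (by decide)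
  have e3 := rowsum 3 (by decide)
  have e4 := rowsum 4 (by decide)
  rw [cardC 1] at e1; rw [cardC 2] at e2; rw [cardC 3] at e3; rw [cardC 4] at e4
  have s1 := sigma 1
  have s2 := sigma 2
  have s3 := sigma 3
  have s4 := sigma 4
  rw [show (-1 : ZMod 5) = 4 by decide] at s1
  rw [show (-2 : ZMod 5) = 3 by decide] at s2
  rw [show (-3 : ZMod 5) = 2 by decide] at s3
  rw [show (-4 : ZMod 5) = 1 by decide] at s4
  have herase : ((C 0).erase 1).card = (C 0).card - 1 := Finset.card_erase_of_mem hone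
  have hfpos : 1 ≤ (C 0).card := Finset.card_pos.mpr ⟨1, hone⟩
  rw [herase] at hbound
  rw [hcardU] at hbound
  omega


include hL5 in
lemma coset_mem (i : ℤ) (z : ZMod p) :
    z ∈ coset p g L i ↔ ∃ w : (ZMod p)ˣ, (w : ZMod p) = z ∧ chi g hg w = (i : ZMod 5) := by
  constructor
  · rintro ⟨h, hh, rfl⟩
    refine ⟨g ^ i * h, rfl, ?_⟩
    rw [chi_mul g hg L hL5, chi_eq g hg L hL5 (rfl : g ^ i = g ^ i),
      (chi_zero_iff g hg L hL5).mpr hh, add_zero]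
  · rintro ⟨w, hw, hcw⟩
    refine ⟨g ^ (-i) * w, ?_, ?_⟩
    · have : chi g hg (g ^ (-i) * w) = 0 := by
        rw [chi_mul g hg L hL5, chi_eq g hg L hL5 (rfl : g ^ (-i) = g ^ (-i)), hcw]
        push_cast
        ring
      exact (chi_zero_iff g hg L hL5).mp this
    · show ((g ^ i * (g ^ (-i) * w) : (ZMod p)ˣ) : ZMod p) = z
      rw [← mul_assoc, ← zpow_add]
      simpa using hw

end Aux

lemma index_five {p : ℕ} [Fact p.Prime] (g : (ZMod p)ˣ)
    (hg : ∀ x : (ZMod p)ˣ, x ∈ Subgroup.zpowers g)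
    (L : Subgroup (ZMod p)ˣ) (hℓ : L.index = 5) :
    ∀ k : ℤ, g ^ k ∈ L ↔ (5:ℤ) ∣ k := by
  have hcard : Nat.card ((ZMod p)ˣ ⧸ L) = 5 := by
    rw [← Subgroup.index_eq_card]; exact hℓ
  set q : (ZMod p)ˣ ⧸ L := QuotientGroup.mk g with hq
  have horder : orderOf q = 5 := by
    have h1 : orderOf q ∣ 5 := hcard ▸ orderOf_dvd_natCard q
    rcases (Nat.Prime.eq_one_or_self_of_dvd (by norm_num) _ h1) with h | h
    · exfalso
      have hq1 : q = 1 := orderOf_eq_one_iff.mp h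
      have hall : ∀ y : (ZMod p)ˣ ⧸ L, y = 1 := by
        intro y
        induction y using QuotientGroup.induction_on with
        | H x =>
          obtain ⟨k, hk⟩ := Subgroup.mem_zpowers_iff.mp (hg x)
          rw [← hk]
          have : (QuotientGroup.mk (g ^ k) : (ZMod p)ˣ ⧸ L) = q ^ k := by
            rw [hq]; rfl
          rw [this, hq1, one_zpow]
      have : Nat.card ((ZMod p)ˣ ⧸ L) = 1 := by
        have : Subsingleton ((ZMod p)ˣ ⧸ L) := ⟨fun a b => by rw [hall a, hall b]⟩
        exact Nat.card_eq_one_iff_unique.mpr ⟨this, ⟨1⟩⟩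
      omega
    · exact h
  intro k
  have hmk : g ^ k ∈ L ↔ q ^ k = 1 := by
    rw [hq]
    rw [← QuotientGroup.mk_zpow]
    exact (QuotientGroup.eq_one_iff _).symm
  rw [hmk, ← orderOf_dvd_iff_zpow_eq_one, horder]
  norm_num

theorem stmt_17 (p : ℕ) [Fact p.Prime] (hodd : Odd p)
    (u : (ZMod p)ˣ) (hu : (u : ZMod p) = 2)
    (L : Subgroup (ZMod p)ˣ) (hL : L = Subgroup.closure {-1, u})
    (hℓ : L.index = 5)
    (g : (ZMod p)ˣ) (hg : ∀ x : (ZMod p)ˣ, x ∈ Subgroup.zpowers g) :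
    0 < ∑ i ∈ Finset.Icc 1 4, cyc p g L (i : ℤ) (2 * (i : ℤ)) := by
  by_contra hcon
  have hL5 := index_five g hg L hℓ
  have hneg : (-1 : (ZMod p)ˣ) ∈ L := by
    rw [hL]; exact Subgroup.subset_closure (Set.mem_insert _ _)
  apply key g hg L hL5 hneg
  intro i hi x y hx hy hcy
  set n : ℕ := i.val with hn
  have hn5 : n < 5 := ZMod.val_lt i
  have hn0 : n ≠ 0 := fun h => hi (by rwa [← ZMod.val_eq_zero])
  have hcast : ((n : ℤ) : ZMod 5) = i := by
    push_cast
    simp [hn, ZMod.natCast_val, ZMod.cast_id]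
  have hsum : ∑ i ∈ Finset.Icc 1 4, cyc p g L (i : ℤ) (2 * (i : ℤ)) = 0 :=
    Nat.eq_zero_of_not_pos hcon
  have hterm : cyc p g L (n : ℤ) (2 * (n : ℤ)) = 0 := by
    refine (Finset.sum_eq_zero_iff.mp hsum) n (Finset.mem_Icc.mpr ⟨?_, by omega⟩)
    omega
  have hzmem : (1 + (x : ZMod p)) ∈
      ((fun x => 1 + x) '' coset p g L (n : ℤ)) ∩ coset p g L (2 * (n : ℤ)) := by
    constructor
    · exact ⟨(x : ZMod p),
        (coset_mem g hg L hL5 _ _).mpr ⟨x, rfl, by rw [hx, hcast]⟩, rfl⟩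
    · refine (coset_mem g hg L hL5 _ _).mpr ⟨y, hy, ?_⟩
      rw [hcy]
      push_cast [hcast]
      ring
  have : 0 < cyc p g L (n : ℤ) (2 * (n : ℤ)) := by
    rw [cyc]
    exact (Set.ncard_pos (Set.toFinite _)).mpr ⟨_, hzmem⟩
  omega
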